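/- For b > 0 and all ν ∈ [0, 1/2], we have L(1, √b) · log S(√b) ≥ ν b + (1−ν) − b^ν − ν(√b − 1)². -/

import Mathlib

/-- Specht's ratio `S(h) = h^{1/(h-1)} / (e log h^{1/(h-1)})` for `h ≠ 1`, with `S(1) = 1`. -/
noncomputable def specht (h : ℝ) : ℝ :=
  if h = 1 then 1
  else h ^ ((1:ℝ)/(h-1)) / (Real.exp 1 * Real.log (h ^ ((1:ℝ)/(h-1))))

/-- The logarithmic mean `L(x,y) = (y-x)/(log y - log x)` for `x ≠ y`, with `L(x,x) = x`. -/
noncomputable def logMean (x y : ℝ) : ℝ :=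
  if x = y then x else (y - x) / (Real.log y - Real.log x)

theorem logMean_log_specht_ge (b : ℝ) (hb : 0 < b) (ν : ℝ) (hν : ν ∈ Set.Icc (0:ℝ) (1/2)) :
    ν * b + (1 - ν) - b ^ ν - ν * (Real.sqrt b - 1) ^ 2 ≤
      logMean 1 (Real.sqrt b) * Real.log (specht (Real.sqrt b)) := by
  obtain ⟨hν0, hν1⟩ := hν
  set s := Real.sqrt b with hs_def
  have hs : 0 < s := Real.sqrt_pos.mpr hb
  have hss : s * s = b := Real.mul_self_sqrt hb.le
  by_cases h1 : s = 1
  · have hb1 : b = 1 := by rw [← hss, h1]; ring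
    simp [specht, logMean, h1, hb1]
  · have hl : Real.log s ≠ 0 := by
      intro h
      rcases (Real.log_eq_zero).mp h with h' | h' | h' <;> [linarith; exact h1 h'; linarith]
    have hL : 0 < (s - 1) / Real.log s := by
      rcases lt_or_gt_of_ne h1 with h | h
      · exact div_pos_of_neg_of_neg (by linarith) (Real.log_neg hs h)
      · exact div_pos (by linarith) (Real.log_pos h)
    set L := (s - 1) / Real.log s with hL_def
    have hLne : L ≠ 0 := ne_of_gt hL
    have hLlog : L * Real.log s = s - 1 := div_mul_cancel₀ _ hl
    have hmean : logMean 1 s = L := by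
      rw [logMean, if_neg (fun h => h1 h.symm), Real.log_one]
      rw [sub_zero, hL_def]
    have hu : 0 < s ^ ((1:ℝ)/(s-1)) := Real.rpow_pos_of_pos hs _
    have hlogu : Real.log (s ^ ((1:ℝ)/(s-1))) = 1 / L := by
      rw [Real.log_rpow hs, hL_def, one_div_div]
      ring
    have hlogu_pos : 0 < Real.log (s ^ ((1:ℝ)/(s-1))) := by
      rw [hlogu]; positivity
    have hspecht : Real.log (specht s) = 1/L - 1 + Real.log L := by
      rw [specht, if_neg h1, Real.log_div (ne_of_gt hu) (by positivity),
        Real.log_mul (Real.exp_ne_zero 1) (ne_of_gt hlogu_pos), Real.log_exp, hlogu,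
        Real.log_div one_ne_zero hLne, Real.log_one]
      ring
    have hlogb : Real.log b = 2 * Real.log s := by
      rw [hs_def, Real.log_sqrt hb.le]; ring
    have hbν : b ^ ν = Real.exp (2 * Real.log s * ν) := by
      rw [Real.rpow_def_of_pos hb, hlogb]
    have hexpL : Real.exp (Real.log L) = L := Real.exp_log hL
    have key : L + 2 * ν * (s - 1) - L * Real.log L ≤ Real.exp (2 * Real.log s * ν) := by
      have h2 := Real.add_one_le_exp (2 * Real.log s * ν - Real.log L)
      have h3 : Real.exp (Real.log L) * Real.exp (2 * Real.log s * ν - Real.log L)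
          = Real.exp (2 * Real.log s * ν) := by
        rw [← Real.exp_add]; ring_nf
      have h4 := mul_le_mul_of_nonneg_left h2 hL.le
      rw [hexpL] at h3
      rw [h3] at h4
      have h5 : ν * (L * Real.log s) = ν * (s - 1) := by rw [hLlog]
      nlinarith [h4, h5]
    have hinv : L * (1 / L) = 1 := by field_simp
    rw [hmean, hspecht, hbν, ← hss]
    nlinarith [key, hinv]
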